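/- Let x₀, x₁ ∈ ℝ and let y₀, y₁ ≥ 0 be not both zero. Suppose |x₁ − x₀| > (1/2)·[π·(y₁² + y₀²) + 4y₁y₀]. Then the Legendre–Fenchel transform satisfies Λ*(x₀, y₀, x₁, y₁) = π·(|x₁ − x₀| − 2y₁y₀). -/

import Mathlib

/-- The limiting cumulant generating function `Λ` for the Grushin model with
initial point `(x₀, y₀)`: for `0 < |δ| < π`,
`Λ(δ,γ) = [(4δ²y₀² + γ²)·sin(δ/2) + 4x₀δ²·cos(δ/2) + 4y₀γδ] / (4δ·cos(δ/2))`;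
`Λ(0,γ) = γ²/8 + y₀γ`; and `Λ(δ,γ) = +∞` for `|δ| ≥ π`. -/
noncomputable def Lam (x0 y0 : ℝ) (δ γ : ℝ) : EReal :=
  if |δ| < Real.pi then
    if δ = 0 then ((γ ^ 2 / 8 + y0 * γ : ℝ) : EReal)
    else ((((4 * δ ^ 2 * y0 ^ 2 + γ ^ 2) * Real.sin (δ / 2) + 4 * x0 * δ ^ 2 * Real.cos (δ / 2) +
        4 * y0 * γ * δ) / (4 * δ * Real.cos (δ / 2)) : ℝ) : EReal)
  else ⊤

/-- The Legendre–Fenchel transform `Λ*(x₀,y₀,x₁,y₁) = sup_{(δ,γ)} [x₁δ + y₁γ − Λ(δ,γ)]`. -/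
noncomputable def LamStar (x0 y0 x1 y1 : ℝ) : EReal :=
  ⨆ p : ℝ × ℝ, (((x1 * p.1 + y1 * p.2 : ℝ) : EReal) - Lam x0 y0 p.1 p.2)

/-- The core trigonometric inequality in the far regime. -/
lemma core_ineq (A c d : ℝ) (hA : Real.pi * c / 2 + d ≤ A) (hc : 0 ≤ c) (hd : 0 ≤ d)
    {u : ℝ} (hu : 0 < u) (hu2 : u < Real.pi / 2) :
    2 * u * A + 2 * u * (c * Real.cos u - d) / Real.sin u ≤ Real.pi * (A - d) := by
  have hπ := Real.pi_pos
  have hs : 0 < Real.sin u := Real.sin_pos_of_pos_of_lt_pi hu (by linarith)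
  have hc0 : 0 ≤ Real.cos u := Real.cos_nonneg_of_mem_Icc ⟨by linarith, hu2.le⟩
  have hjord : 2 * u ≤ Real.pi * Real.sin u := by
    have h := Real.mul_le_sin hu.le hu2.le
    rw [div_mul_eq_mul_div, div_le_iff₀ hπ] at h
    linarith
  have hcos : 2 * Real.cos u ≤ Real.pi - 2 * u := by
    have h1 : Real.cos u = Real.sin (Real.pi / 2 - u) := (Real.sin_pi_div_two_sub u).symm
    have h2 : Real.sin (Real.pi / 2 - u) ≤ Real.pi / 2 - u := Real.sin_le (by linarith)
    linarith
  have hs1 : Real.sin u ≤ 1 := Real.sin_le_one u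
  rw [← sub_nonneg]
  have key : 0 ≤ (Real.pi * (A - d) - (2 * u * A + 2 * u * (c * Real.cos u - d) / Real.sin u)) *
      Real.sin u := by
    have hdiv : 2 * u * (c * Real.cos u - d) / Real.sin u * Real.sin u
        = 2 * u * (c * Real.cos u - d) := by field_simp
    nlinarith [mul_nonneg (sub_nonneg.2 hA)
        (mul_nonneg (by linarith : (0:ℝ) ≤ Real.pi - 2*u) hs.le),
      mul_nonneg hc (mul_nonneg (by linarith : (0:ℝ) ≤ Real.pi * Real.sin u - 2*u)
        (by linarith : (0:ℝ) ≤ Real.pi - 2*u)),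
      mul_nonneg hc (mul_nonneg hu.le (by linarith : (0:ℝ) ≤ Real.pi - 2*u - 2*Real.cos u)),
      mul_nonneg hd (mul_nonneg hu.le (by linarith : (0:ℝ) ≤ 1 - Real.sin u))]
  nlinarith [key, hs]

/-- Algebraic identity rewriting the objective function in completed-square form. -/
lemma ident (x0 y0 x1 y1 : ℝ) (u γ δ : ℝ) (hδ : δ = 2*u ∨ δ = -(2*u))
    (hs : Real.sin u ≠ 0) (hcu : Real.cos u ≠ 0) (hu0 : u ≠ 0) :
    x1 * δ + y1 * γ - ((4 * δ ^ 2 * y0 ^ 2 + γ ^ 2) * Real.sin (δ / 2)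
        + 4 * x0 * δ ^ 2 * Real.cos (δ / 2) + 4 * y0 * γ * δ) / (4 * δ * Real.cos (δ / 2))
    = (x1 - x0) * δ + 2 * u * ((y0 ^ 2 + y1 ^ 2) * Real.cos u - 2 * y1 * y0) / Real.sin u
      - (Real.sin u / (8 * u * Real.cos u)) *
          (γ - 4 * u * (y1 * Real.cos u - y0) / Real.sin u) ^ 2 := by
  have hpy : Real.sin u ^ 2 = 1 - Real.cos u ^ 2 := by
    have := Real.sin_sq_add_cos_sq u; linarith
  have h2 : (y1 * Real.cos u - y0) ^ 2 - y0 ^ 2 * Real.sin u ^ 2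
      = Real.cos u * ((y0 ^ 2 + y1 ^ 2) * Real.cos u - 2 * y1 * y0) := by
    linear_combination (-(y0 ^ 2)) * hpy
  have h3 : 2 * u * (Real.cos u * ((y0 ^ 2 + y1 ^ 2) * Real.cos u - 2 * y1 * y0))
      / (Real.sin u * Real.cos u)
      = 2 * u * ((y0 ^ 2 + y1 ^ 2) * Real.cos u - 2 * y1 * y0) / Real.sin u := by
    field_simp
  rcases hδ with rfl | rfl
  · rw [show 2 * u / 2 = u by ring]
    rw [← h3, ← h2]
    field_simp
    ring
  · rw [show -(2 * u) / 2 = -u by ring, Real.sin_neg, Real.cos_neg]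
    rw [← h3, ← h2]
    field_simp
    ring

/-- Theorem: in the far δ-regime, `Λ*(x₀,y₀,x₁,y₁) = π(|x₁ − x₀| − 2y₁y₀)`. -/
theorem legendre_transform_far_regime (x0 x1 y0 y1 : ℝ)
    (hy0 : 0 ≤ y0) (hy1 : 0 ≤ y1) (hy : ¬(y0 = 0 ∧ y1 = 0))
    (hfar : 1 / 2 * (Real.pi * (y1 ^ 2 + y0 ^ 2) + 4 * y1 * y0) < |x1 - x0|) :
    LamStar x0 y0 x1 y1 = ((Real.pi * (|x1 - x0| - 2 * y1 * y0) : ℝ) : EReal) := by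
  have hπ := Real.pi_pos
  set A := |x1 - x0| with hAdef
  have hA : Real.pi * (y0 ^ 2 + y1 ^ 2) / 2 + 2 * y1 * y0 ≤ A := by nlinarith [hfar]
  have hc : (0:ℝ) ≤ y0 ^ 2 + y1 ^ 2 := by positivity
  have hd : (0:ℝ) ≤ 2 * y1 * y0 := by positivity
  apply le_antisymm
  · -- upper bound
    simp only [LamStar]
    apply iSup_le
    rintro ⟨δ, γ⟩
    dsimp only
    by_cases h1 : |δ| < Real.pi
    · by_cases h2 : δ = 0
      · subst h2
        have hL : Lam x0 y0 0 γ = ((γ ^ 2 / 8 + y0 * γ : ℝ) : EReal) := by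
          simp [Lam, hπ]
        rw [hL, ← EReal.coe_sub, EReal.coe_le_coe_iff]
        have hπ3 := Real.pi_gt_three
        have hπA : 0 ≤ Real.pi * (A - 2 * y1 * y0 - Real.pi * (y0 ^ 2 + y1 ^ 2) / 2) :=
          mul_nonneg hπ.le (by linarith)
        have hπ2 : (9:ℝ) ≤ Real.pi ^ 2 := by nlinarith
        nlinarith [sq_nonneg (γ - 4 * (y1 - y0)), mul_nonneg hy0 hy1, hπA,
          mul_nonneg (by linarith : (0:ℝ) ≤ Real.pi ^ 2 - 9) hc]
      · simp only [Lam, if_pos h1, if_neg h2]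
        rw [← EReal.coe_sub, EReal.coe_le_coe_iff]
        have habs : 0 < |δ| := abs_pos.2 h2
        set u : ℝ := |δ| / 2 with hudef
        have hu : 0 < u := by positivity
        have hu2 : u < Real.pi / 2 := by rw [hudef]; linarith
        have hδor : δ = 2 * u ∨ δ = -(2 * u) := by
          rcases abs_cases δ with ⟨h, _⟩ | ⟨h, _⟩
          · left; rw [hudef, h]; ring
          · right; rw [hudef, h]; ring
        have hs : 0 < Real.sin u := Real.sin_pos_of_pos_of_lt_pi hu (by linarith)
        have hcu : 0 < Real.cos u := Real.cos_pos_of_mem_Ioo ⟨by linarith, hu2⟩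
        rw [ident x0 y0 x1 y1 u γ δ hδor hs.ne' hcu.ne' hu.ne']
        have hb1 : (x1 - x0) * δ ≤ A * (2 * u) := by
          calc (x1 - x0) * δ ≤ |(x1 - x0) * δ| := le_abs_self _
            _ = A * (2 * u) := by rw [abs_mul, hudef]; rw [hAdef]; ring
        have hsq : 0 ≤ (Real.sin u / (8 * u * Real.cos u)) *
            (γ - 4 * u * (y1 * Real.cos u - y0) / Real.sin u) ^ 2 := by positivity
        have hcore := core_ineq A (y0 ^ 2 + y1 ^ 2) (2 * y1 * y0) hA hc hd hu hu2
        linarith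
    · simp only [Lam, if_neg h1]
      rw [EReal.sub_top]
      exact bot_le
  · -- lower bound
    have hG : Filter.Tendsto
        (fun u : ℝ => 2 * u * A + 2 * u * ((y0 ^ 2 + y1 ^ 2) * Real.cos u - 2 * y1 * y0)
          / Real.sin u)
        (nhdsWithin (Real.pi / 2) (Set.Iio (Real.pi / 2)))
        (nhds (Real.pi * (A - 2 * y1 * y0))) := by
      have hc1 : ContinuousAt
          (fun u : ℝ => 2 * u * A + 2 * u * ((y0 ^ 2 + y1 ^ 2) * Real.cos u - 2 * y1 * y0)
            / Real.sin u) (Real.pi / 2) := by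
        apply ContinuousAt.add
        · fun_prop
        · apply ContinuousAt.div
          · fun_prop
          · fun_prop
          · rw [Real.sin_pi_div_two]; norm_num
      have hval : 2 * (Real.pi / 2) * A
          + 2 * (Real.pi / 2) * ((y0 ^ 2 + y1 ^ 2) * Real.cos (Real.pi / 2) - 2 * y1 * y0)
            / Real.sin (Real.pi / 2) = Real.pi * (A - 2 * y1 * y0) := by
        rw [Real.cos_pi_div_two, Real.sin_pi_div_two]; ring
      have := hc1.tendsto.mono_left (nhdsWithin_le_nhds (s := Set.Iio (Real.pi / 2)))
      rwa [hval] at this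
    have hev : ∀ᶠ u in nhdsWithin (Real.pi / 2) (Set.Iio (Real.pi / 2)),
        ((2 * u * A + 2 * u * ((y0 ^ 2 + y1 ^ 2) * Real.cos u - 2 * y1 * y0)
          / Real.sin u : ℝ) : EReal) ≤ LamStar x0 y0 x1 y1 := by
      filter_upwards [Ioo_mem_nhdsLT_of_mem
        (Set.mem_Ioc.2 ⟨Real.pi_div_two_pos, le_refl _⟩)] with u hu
      obtain ⟨hu0, hu2⟩ := hu
      have hs : 0 < Real.sin u := Real.sin_pos_of_pos_of_lt_pi hu0 (by linarith)
      have hcu : 0 < Real.cos u := Real.cos_pos_of_mem_Ioo ⟨by linarith, hu2⟩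
      set δ : ℝ := if x0 ≤ x1 then 2 * u else -(2 * u) with hδdef
      set γ : ℝ := 4 * u * (y1 * Real.cos u - y0) / Real.sin u with hγdef
      have hδor : δ = 2 * u ∨ δ = -(2 * u) := by
        rw [hδdef]; split_ifs <;> simp
      have habs : |δ| = 2 * u := by
        rw [hδdef]; split_ifs
        · rw [abs_of_pos (by linarith)]
        · rw [abs_of_neg (by linarith)]; ring
      have h1 : |δ| < Real.pi := by rw [habs]; linarith
      have h2 : δ ≠ 0 := by
        intro h; rw [h, abs_zero] at habs; linarith
      have hxδ : (x1 - x0) * δ = A * (2 * u) := by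
        rw [hδdef]; split_ifs with h
        · have hA1 : A = x1 - x0 := abs_of_nonneg (by linarith)
          rw [hA1]
        · have hA1 : A = -(x1 - x0) := abs_of_neg (by linarith)
          rw [hA1]; ring
      have hterm : (((x1 * δ + y1 * γ : ℝ) : EReal) - Lam x0 y0 δ γ)
          = ((2 * u * A + 2 * u * ((y0 ^ 2 + y1 ^ 2) * Real.cos u - 2 * y1 * y0)
            / Real.sin u : ℝ) : EReal) := by
        simp only [Lam, if_pos h1, if_neg h2]
        rw [← EReal.coe_sub, EReal.coe_eq_coe_iff]
        rw [ident x0 y0 x1 y1 u γ δ hδor hs.ne' hcu.ne' (by linarith : u ≠ 0)]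
        have hz : γ - 4 * u * (y1 * Real.cos u - y0) / Real.sin u = 0 := by
          rw [hγdef]; ring
        rw [hz, hxδ]; ring
      calc ((2 * u * A + 2 * u * ((y0 ^ 2 + y1 ^ 2) * Real.cos u - 2 * y1 * y0)
            / Real.sin u : ℝ) : EReal)
          = (((x1 * δ + y1 * γ : ℝ) : EReal) - Lam x0 y0 δ γ) := hterm.symm
        _ ≤ LamStar x0 y0 x1 y1 := by
            simp only [LamStar]
            exact le_iSup (fun p : ℝ × ℝ =>
              (((x1 * p.1 + y1 * p.2 : ℝ) : EReal) - Lam x0 y0 p.1 p.2)) (δ, γ)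
    exact le_of_tendsto (EReal.tendsto_coe.2 hG) hev
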